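/- Let φ be C^{k+1} on [0,1] and H its degree-(2k+1) Hermite interpolant matching derivatives of orders 0 through k at both endpoints. Then ∫_0^1 H(x) dx = ∫_0^1 φ(x) dx − ∫_0^1 μ_k(x) φ^{(k+1)}(x) dx, where μ_k = r_k^{(k+1)} and r_k(x) = x^{k+1}(1−x)^{k+1}/(2k+2)!. -/

import Mathlib

open Polynomial intervalIntegral Set

/-- iterated derivative of a polynomial evaluation -/
lemma poly_iteratedDeriv (P : Polynomial ℝ) (n : ℕ) :
    iteratedDeriv n (fun t => P.eval t) = fun t => (Polynomial.derivative^[n] P).eval t := by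
  induction n with
  | zero => simp
  | succ n ih =>
    rw [iteratedDeriv_succ, ih, Function.iterate_succ_apply']
    funext t
    exact Polynomial.deriv (p := Polynomial.derivative^[n] P)

/-- one integration-by-parts step on `[0,1]` -/
lemma ibp_step (P : Polynomial ℝ) (f f' : ℝ → ℝ)
    (hf : ContinuousOn f (Set.Icc 0 1)) (hf' : ContinuousOn f' (Set.Icc 0 1))
    (hd : ∀ x ∈ Set.Ioo (0:ℝ) 1, HasDerivAt f (f' x) x) :
    ∫ x in (0:ℝ)..1, P.eval x * f' x
      = P.eval 1 * f 1 - P.eval 0 * f 0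
        - ∫ x in (0:ℝ)..1, P.derivative.eval x * f x := by
  have hPc : Continuous fun x : ℝ => P.eval x := P.continuous_aeval
  have hP'c : Continuous fun x : ℝ => P.derivative.eval x := P.derivative.continuous_aeval
  have hI1 : IntervalIntegrable (fun x => P.eval x * f' x) MeasureTheory.volume 0 1 := by
    apply ContinuousOn.intervalIntegrable
    rw [Set.uIcc_of_le (by norm_num : (0:ℝ) ≤ 1)]
    exact hPc.continuousOn.mul hf'
  have hI2 : IntervalIntegrable (fun x => P.derivative.eval x * f x) MeasureTheory.volume 0 1 := by
    apply ContinuousOn.intervalIntegrable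
    rw [Set.uIcc_of_le (by norm_num : (0:ℝ) ≤ 1)]
    exact hP'c.continuousOn.mul hf
  have key : ∫ x in (0:ℝ)..1,
      (P.derivative.eval x * f x + P.eval x * f' x)
      = P.eval 1 * f 1 - P.eval 0 * f 0 := by
    apply intervalIntegral.integral_eq_sub_of_hasDeriv_right_of_le
      (f := fun x => P.eval x * f x)
      (f' := fun x => P.derivative.eval x * f x + P.eval x * f' x)
      (by norm_num) (hPc.continuousOn.mul hf)
      (fun x hx => ((P.hasDerivAt x).mul (hd x hx)).hasDerivWithinAt)
      (hI2.add hI1)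
  rw [intervalIntegral.integral_add hI2 hI1] at key
  linarith

/-- chain of integrations by parts on `[0,1]` -/
lemma ibp_chain (n : ℕ) (P : Polynomial ℝ) (f : ℕ → ℝ → ℝ)
    (hc : ∀ m, m ≤ n → ContinuousOn (f m) (Set.Icc 0 1))
    (hd : ∀ m, m < n → ∀ x ∈ Set.Ioo (0:ℝ) 1, HasDerivAt (f m) (f (m+1) x) x)
    (hb : ∀ m, m < n →
      (Polynomial.derivative^[m] P).eval 1 * f (n-1-m) 1
        = (Polynomial.derivative^[m] P).eval 0 * f (n-1-m) 0) :
    ∫ x in (0:ℝ)..1, P.eval x * f n x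
      = (-1:ℝ)^n * ∫ x in (0:ℝ)..1, (Polynomial.derivative^[n] P).eval x * f 0 x := by
  induction n generalizing P with
  | zero => simp
  | succ n ih =>
    have step := ibp_step P (f n) (f (n+1)) (hc n (by omega)) (hc (n+1) le_rfl)
      (hd n (by omega))
    have hb0 := hb 0 (by omega)
    simp only [Function.iterate_zero_apply, Nat.add_sub_cancel, Nat.sub_zero] at hb0
    have ihap := ih P.derivative (fun m hm => hc m (by omega))
      (fun m hm => hd m (by omega))
      (fun m hm => by
        have := hb (m+1) (by omega)
        rwa [Function.iterate_succ_apply, show n + 1 - 1 - (m+1) = n - 1 - m by omega] at this)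
    rw [step, ihap, Function.iterate_succ_apply]
    rw [hb0]
    ring

noncomputable def Rpoly (k : ℕ) : Polynomial ℝ :=
  Polynomial.C (((2*k+2).factorial : ℝ))⁻¹ * (Polynomial.X * (1 - Polynomial.X))^(k+1)

lemma Rpoly_eval (k : ℕ) (x : ℝ) :
    (Rpoly k).eval x = x ^ (k + 1) * (1 - x) ^ (k + 1) / (Nat.factorial (2 * k + 2)) := by
  simp [Rpoly, mul_pow]
  ring

lemma Rpoly_ne_zero (k : ℕ) : Rpoly k ≠ 0 := by
  intro h
  have h2 := Rpoly_eval k (1/2)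
  rw [h, Polynomial.eval_zero] at h2
  norm_num at h2
  have h3 : (0:ℝ) < ((1:ℝ)/2) ^ (k + 1) * ((1:ℝ)/2) ^ (k + 1) / ((2*k+2).factorial : ℝ) := by
    have hf : (0:ℝ) < ((2*k+2).factorial : ℝ) := by exact_mod_cast Nat.factorial_pos _
    positivity
  linarith

lemma Rpoly_root_zero (k : ℕ) {m : ℕ} (hm : m ≤ k) :
    (Polynomial.derivative^[m] (Rpoly k)).eval 0 = 0 := by
  have hroot : (Polynomial.derivative^[m] (Rpoly k)).IsRoot 0 := by
    apply Polynomial.isRoot_iterate_derivative_of_lt_rootMultiplicity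
    have hdvd : (Polynomial.X - Polynomial.C (0:ℝ))^(k+1) ∣ Rpoly k := by
      rw [Polynomial.C_0, sub_zero, Rpoly, mul_pow]
      exact dvd_mul_of_dvd_right (dvd_mul_right _ _) _
    have hle := (Polynomial.le_rootMultiplicity_iff (Rpoly_ne_zero k)).mpr hdvd
    omega
  exact hroot

lemma Rpoly_root_one (k : ℕ) {m : ℕ} (hm : m ≤ k) :
    (Polynomial.derivative^[m] (Rpoly k)).eval 1 = 0 := by
  have hroot : (Polynomial.derivative^[m] (Rpoly k)).IsRoot 1 := by
    apply Polynomial.isRoot_iterate_derivative_of_lt_rootMultiplicity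
    have h1 : (1 - Polynomial.X : Polynomial ℝ)^(k+1)
        = (-1)^(k+1) * (Polynomial.X - Polynomial.C 1)^(k+1) := by
      rw [← mul_pow]
      congr 1
      rw [Polynomial.C_1]
      ring
    have hdvd : (Polynomial.X - Polynomial.C (1:ℝ))^(k+1) ∣ Rpoly k := by
      rw [Rpoly, mul_pow, h1]
      exact dvd_mul_of_dvd_right (dvd_mul_of_dvd_right (dvd_mul_left _ _) _) _
    have hle := (Polynomial.le_rootMultiplicity_iff (Rpoly_ne_zero k)).mpr hdvd
    omega
  exact hroot

lemma Rpoly_natDegree_le (k : ℕ) : (Rpoly k).natDegree ≤ 2*k+2 := by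
  have h2 : (1 - Polynomial.X : Polynomial ℝ).natDegree ≤ 1 :=
    le_trans (Polynomial.natDegree_sub_le _ _) (by simp)
  have h1 : (Polynomial.X * (1 - Polynomial.X) : Polynomial ℝ).natDegree ≤ 2 := by
    refine le_trans Polynomial.natDegree_mul_le ?_
    simp only [Polynomial.natDegree_X]
    omega
  have h4 : ((Polynomial.X * (1 - Polynomial.X) : Polynomial ℝ)^(k+1)).natDegree ≤ (k+1)*2 :=
    le_trans Polynomial.natDegree_pow_le (Nat.mul_le_mul_left _ h1)
  have h5 := Polynomial.natDegree_mul_le (p := Polynomial.C (((2*k+2).factorial : ℝ))⁻¹)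
    (q := (Polynomial.X * (1 - Polynomial.X) : Polynomial ℝ)^(k+1))
  have h6 : (Polynomial.C (((2*k+2).factorial : ℝ))⁻¹).natDegree = 0 := Polynomial.natDegree_C _
  rw [Rpoly]
  omega

lemma Rpoly_coeff_top (k : ℕ) :
    (Rpoly k).coeff (2*k+2) = (-1)^(k+1) * (((2*k+2).factorial : ℝ))⁻¹ := by
  have hX : (Polynomial.X * (1 - Polynomial.X) : Polynomial ℝ)
      = Polynomial.C (-1:ℝ) * (Polynomial.X^2 - Polynomial.X) := by
    rw [Polynomial.C_neg, Polynomial.C_1]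
    ring
  have hmonic : (Polynomial.X^2 - Polynomial.X : Polynomial ℝ).Monic := by
    apply Polynomial.monic_X_pow_sub
    rw [Polynomial.degree_X]
    exact_mod_cast Nat.one_lt_two
  have hQ : ((Polynomial.X^2 - Polynomial.X : Polynomial ℝ)^(k+1)).coeff (2*k+2) = 1 := by
    have hdeg2 : (Polynomial.X^2 - Polynomial.X : Polynomial ℝ).natDegree = 2 := by
      rw [Polynomial.natDegree_sub_eq_left_of_natDegree_lt] <;> simp
    have hm := hmonic.pow (n := k+1)
    have hnd : ((Polynomial.X^2 - Polynomial.X : Polynomial ℝ)^(k+1)).natDegree = 2*k+2 := by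
      rw [hmonic.natDegree_pow, hdeg2]
      ring
    have h := hm.coeff_natDegree
    rwa [hnd] at h
  rw [Rpoly, hX, mul_pow, ← Polynomial.C_pow, Polynomial.coeff_C_mul, Polynomial.coeff_C_mul, hQ]
  ring

lemma Rpoly_top_deriv (k : ℕ) :
    Polynomial.derivative^[2*k+2] (Rpoly k) = Polynomial.C ((-1:ℝ)^(k+1)) := by
  have hnd : (Polynomial.derivative^[2*k+2] (Rpoly k)).natDegree ≤ 0 := by
    have h1 := Polynomial.natDegree_iterate_derivative (Rpoly k) (2*k+2)
    have h2 := Rpoly_natDegree_le k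
    omega
  rw [Polynomial.eq_C_of_natDegree_le_zero hnd]
  congr 1
  rw [Polynomial.coeff_iterate_derivative]
  simp only [zero_add, Nat.descFactorial_self]
  rw [Rpoly_coeff_top k, nsmul_eq_mul, mul_comm ((-1:ℝ)^(k+1)), ← mul_assoc,
    mul_inv_cancel₀ (by exact_mod_cast Nat.factorial_ne_zero _)]
  ring

lemma contOn_int {F : ℝ → ℝ} (hF : ContinuousOn F (Set.Icc 0 1)) :
    IntervalIntegrable F MeasureTheory.volume 0 1 := by
  apply ContinuousOn.intervalIntegrable
  rwa [Set.uIcc_of_le (by norm_num : (0:ℝ) ≤ 1)]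

/-- Average formula for the Hermite interpolant: if `H` is the degree-`(2k+1)` Hermite
interpolant of a `C^{k+1}` function `φ` on `[0,1]` (matching derivatives of orders
`0,…,k` at both endpoints), then
`∫_0^1 H = ∫_0^1 φ - ∫_0^1 μ_k φ^{(k+1)}`, where `μ_k = r_k^{(k+1)}` and
`r_k x = x^{k+1}(1-x)^{k+1}/(2k+2)!`. -/
theorem hermite_interpolant_average (k : ℕ) (φ : ℝ → ℝ)
    (hφ : ContDiffOn ℝ (k + 1 : ℕ) φ (Set.Icc 0 1))
    (H : Polynomial ℝ) (hdeg : H.natDegree ≤ 2 * k + 1)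
    (h0 : ∀ α ≤ k, iteratedDeriv α (fun t => H.eval t) 0 =
        iteratedDerivWithin α φ (Set.Icc 0 1) 0)
    (h1 : ∀ α ≤ k, iteratedDeriv α (fun t => H.eval t) 1 =
        iteratedDerivWithin α φ (Set.Icc 0 1) 1) :
    let r : ℝ → ℝ := fun x => x ^ (k + 1) * (1 - x) ^ (k + 1) / (Nat.factorial (2 * k + 2))
    let μ : ℝ → ℝ := iteratedDeriv (k + 1) r
    ∫ x in (0 : ℝ)..1, H.eval x =
      (∫ x in (0 : ℝ)..1, φ x) -
        ∫ x in (0 : ℝ)..1, μ x * iteratedDerivWithin (k + 1) φ (Set.Icc 0 1) x := by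
  intro r μ
  have hud : UniqueDiffOn ℝ (Set.Icc (0:ℝ) 1) := uniqueDiffOn_Icc (by norm_num)
  have hμ : μ = fun x => (Polynomial.derivative^[k+1] (Rpoly k)).eval x := by
    have hr : r = fun x => (Rpoly k).eval x := funext fun x => (Rpoly_eval k x).symm
    show iteratedDeriv (k+1) r = _
    rw [hr, poly_iteratedDeriv]
  -- continuity of the iterated derivatives of φ
  have hψc : ∀ m, m ≤ k+1 → ContinuousOn (iteratedDerivWithin m φ (Set.Icc 0 1)) (Set.Icc 0 1) :=
    fun m hm => hφ.continuousOn_iteratedDerivWithin (by exact_mod_cast hm) hud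
  have hpc : ∀ m : ℕ, Continuous (fun x : ℝ => (Polynomial.derivative^[m] H).eval x) :=
    fun m => (Polynomial.derivative^[m] H).continuous_aeval
  -- derivatives at interior points
  have hψd : ∀ m, m < k+1 → ∀ x ∈ Set.Ioo (0:ℝ) 1,
      HasDerivAt (iteratedDerivWithin m φ (Set.Icc 0 1))
        (iteratedDerivWithin (m+1) φ (Set.Icc 0 1) x) x := by
    intro m hm x hx
    have hxI : x ∈ Set.Icc (0:ℝ) 1 := ⟨hx.1.le, hx.2.le⟩
    have hdw : DifferentiableWithinAt ℝ (iteratedDerivWithin m φ (Set.Icc 0 1))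
        (Set.Icc 0 1) x :=
      hφ.differentiableOn_iteratedDerivWithin (by exact_mod_cast hm) hud x hxI
    have hnhds : Set.Icc (0:ℝ) 1 ∈ nhds x := Icc_mem_nhds hx.1 hx.2
    have h2 : HasDerivAt (iteratedDerivWithin m φ (Set.Icc 0 1))
        (derivWithin (iteratedDerivWithin m φ (Set.Icc 0 1)) (Set.Icc 0 1) x) x :=
      hdw.hasDerivWithinAt.hasDerivAt hnhds
    rwa [show iteratedDerivWithin (m+1) φ (Set.Icc 0 1) x
      = derivWithin (iteratedDerivWithin m φ (Set.Icc 0 1)) (Set.Icc 0 1) x from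
      by rw [iteratedDerivWithin_succ]]
  have hpd : ∀ m : ℕ, ∀ x : ℝ,
      HasDerivAt (fun y => (Polynomial.derivative^[m] H).eval y)
        ((Polynomial.derivative^[m+1] H).eval x) x := by
    intro m x
    have h2 := (Polynomial.derivative^[m] H).hasDerivAt x
    rwa [show (Polynomial.derivative^[m+1] H)
      = Polynomial.derivative (Polynomial.derivative^[m] H) from
      Function.iterate_succ_apply' _ _ _]
  -- endpoint matching
  have hg0 : ∀ m, m ≤ k → iteratedDerivWithin m φ (Set.Icc 0 1) 0
      = (Polynomial.derivative^[m] H).eval 0 := by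
    intro m hm
    have h2 := h0 m hm
    rw [poly_iteratedDeriv] at h2
    exact h2.symm
  have hg1 : ∀ m, m ≤ k → iteratedDerivWithin m φ (Set.Icc 0 1) 1
      = (Polynomial.derivative^[m] H).eval 1 := by
    intro m hm
    have h2 := h1 m hm
    rw [poly_iteratedDeriv] at h2
    exact h2.symm
  -- first chain: for g = ψ - h
  have chain1 : ∫ x in (0:ℝ)..1, (Polynomial.derivative^[k+1] (Rpoly k)).eval x *
        (iteratedDerivWithin (k+1) φ (Set.Icc 0 1) x - (Polynomial.derivative^[k+1] H).eval x)
      = (-1:ℝ)^(k+1) * ∫ x in (0:ℝ)..1,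
        (Polynomial.derivative^[k+1] (Polynomial.derivative^[k+1] (Rpoly k))).eval x *
          (iteratedDerivWithin 0 φ (Set.Icc 0 1) x - (Polynomial.derivative^[0] H).eval x) := by
    apply ibp_chain (k+1) (Polynomial.derivative^[k+1] (Rpoly k))
      (fun m x => iteratedDerivWithin m φ (Set.Icc 0 1) x - (Polynomial.derivative^[m] H).eval x)
    · exact fun m hm => (hψc m hm).sub ((hpc m).continuousOn)
    · exact fun m hm x hx => (hψd m hm x hx).sub (hpd m x)
    · intro m hm
      rw [show k+1-1-m = k-m from by omega, hg0 (k-m) (by omega), hg1 (k-m) (by omega)]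
      simp
  -- second chain: for h alone
  have chain2 : ∫ x in (0:ℝ)..1, (Rpoly k).eval x * (Polynomial.derivative^[k+1+(k+1)] H).eval x
      = (-1:ℝ)^(k+1) * ∫ x in (0:ℝ)..1, (Polynomial.derivative^[k+1] (Rpoly k)).eval x *
          (Polynomial.derivative^[k+1+0] H).eval x := by
    apply ibp_chain (k+1) (Rpoly k)
      (fun m x => (Polynomial.derivative^[k+1+m] H).eval x)
    · exact fun m _ => (hpc (k+1+m)).continuousOn
    · exact fun m _ x _ => hpd (k+1+m) x
    · intro m hm
      rw [Rpoly_root_zero k (by omega : m ≤ k), Rpoly_root_one k (by omega : m ≤ k)]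
      ring
  -- evaluate chain2 : left side is zero
  have hHzero : Polynomial.derivative^[k+1+(k+1)] H = 0 :=
    Polynomial.iterate_derivative_eq_zero (by omega)
  have hL2 : ∫ x in (0:ℝ)..1, (Rpoly k).eval x * (Polynomial.derivative^[k+1+(k+1)] H).eval x
      = 0 := by
    rw [hHzero]
    simp
  have hI2 : ∫ x in (0:ℝ)..1, (Polynomial.derivative^[k+1] (Rpoly k)).eval x *
      (Polynomial.derivative^[k+1] H).eval x = 0 := by
    rw [hL2] at chain2
    rcases mul_eq_zero.mp chain2.symm with h2 | h2
    · exact absurd h2 (pow_ne_zero _ (by norm_num))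
    · rwa [show k+1+0 = k+1 from rfl] at h2
  -- simplify chain1
  have hiterate : Polynomial.derivative^[k+1] (Polynomial.derivative^[k+1] (Rpoly k))
      = Polynomial.C ((-1:ℝ)^(k+1)) := by
    rw [← Function.iterate_add_apply, show (k+1)+(k+1) = 2*k+2 from by ring]
    exact Rpoly_top_deriv k
  rw [hiterate] at chain1
  simp only [Polynomial.eval_C, Function.iterate_zero_apply, iteratedDerivWithin_zero] at chain1
  rw [intervalIntegral.integral_const_mul, ← mul_assoc, ← pow_add,
    Even.neg_one_pow ⟨k+1, by ring⟩, one_mul] at chain1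
  -- chain1 : ∫ d * (ψ - h) = ∫ (φ - H)
  have hint_φ : IntervalIntegrable φ MeasureTheory.volume 0 1 := contOn_int hφ.continuousOn
  have hint_H : IntervalIntegrable (fun x => H.eval x) MeasureTheory.volume 0 1 :=
    contOn_int (H.continuous_aeval).continuousOn
  have hdcont : Continuous fun x : ℝ => (Polynomial.derivative^[k+1] (Rpoly k)).eval x :=
    (Polynomial.derivative^[k+1] (Rpoly k)).continuous_aeval
  have hint_dψ : IntervalIntegrable
      (fun x => (Polynomial.derivative^[k+1] (Rpoly k)).eval x *
        iteratedDerivWithin (k+1) φ (Set.Icc 0 1) x) MeasureTheory.volume 0 1 :=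
    contOn_int (hdcont.continuousOn.mul (hψc (k+1) le_rfl))
  have hint_dh : IntervalIntegrable
      (fun x => (Polynomial.derivative^[k+1] (Rpoly k)).eval x *
        (Polynomial.derivative^[k+1] H).eval x) MeasureTheory.volume 0 1 :=
    contOn_int (hdcont.continuousOn.mul ((hpc (k+1)).continuousOn))
  have hsplitL : ∫ x in (0:ℝ)..1, (Polynomial.derivative^[k+1] (Rpoly k)).eval x *
        (iteratedDerivWithin (k+1) φ (Set.Icc 0 1) x - (Polynomial.derivative^[k+1] H).eval x)
      = (∫ x in (0:ℝ)..1, (Polynomial.derivative^[k+1] (Rpoly k)).eval x *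
          iteratedDerivWithin (k+1) φ (Set.Icc 0 1) x)
        - ∫ x in (0:ℝ)..1, (Polynomial.derivative^[k+1] (Rpoly k)).eval x *
            (Polynomial.derivative^[k+1] H).eval x := by
    rw [← intervalIntegral.integral_sub hint_dψ hint_dh]
    congr 1
    funext x
    ring
  have hsplitR : ∫ x in (0:ℝ)..1, (φ x - H.eval x)
      = (∫ x in (0:ℝ)..1, φ x) - ∫ x in (0:ℝ)..1, H.eval x :=
    intervalIntegral.integral_sub hint_φ hint_H
  rw [hsplitL, hsplitR, hI2, sub_zero] at chain1
  -- finish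
  simp only [hμ]
  linarith
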